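/- For every k ∈ ℕ and every n ≥ 1 there exists x ∈ c00 with ‖x‖_{ℓ1} = 1 and ‖x‖_{k+1} / ‖x‖_k ≥ n/4. Hence, for every k ∈ ℕ, sup{ ‖x‖_{k+1} / ‖x‖_k : x ∈ c00, ‖x‖_{ℓ1} = 1 } = ∞. -/

import Mathlib

/-- The ℓ¹-norm on `c00 = ℕ →₀ ℝ`. -/
noncomputable def l1 (x : ℕ →₀ ℝ) : ℝ := ∑ n ∈ x.support, |x n|

/-- `restr E x = Ex`, the restriction of `x` to the finite set `E`. -/
noncomputable def restr (E : Finset ℕ) (x : ℕ →₀ ℝ) : ℕ →₀ ℝ :=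
  x.filter (fun n => n ∈ E)

/-- `Admissible n Es` says that `E_1, …, E_n` are finite nonempty subsets of ℕ
with `n ≤ E_1 < E_2 < ⋯ < E_n`. -/
def Admissible (n : ℕ) (Es : Fin n → Finset ℕ) : Prop :=
  0 < n ∧ (∀ i, (Es i).Nonempty) ∧
    (∀ i : Fin n, ∀ a ∈ Es i, n ≤ a) ∧
    (∀ i j : Fin n, i < j → ∀ a ∈ Es i, ∀ b ∈ Es j, a < b)

/-- The Tsirelson iterate norms `‖·‖_k`. -/
noncomputable def tsir : ℕ → (ℕ →₀ ℝ) → ℝ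
  | 0, x => ⨆ n, |x n|
  | (k + 1), x => max (tsir k x)
      (sSup { r : ℝ | ∃ n : ℕ, ∃ Es : Fin n → Finset ℕ, Admissible n Es ∧
        r = (1 / 2) * ∑ i, tsir k (restr (Es i) x) })

/-! ### Section 1 : l1 and restr basics -/

lemma l1_nonneg (x : ℕ →₀ ℝ) : 0 ≤ l1 x :=
  Finset.sum_nonneg fun _ _ => abs_nonneg _

lemma l1_eq_sum_superset {x : ℕ →₀ ℝ} {s : Finset ℕ} (h : x.support ⊆ s) :
    l1 x = ∑ n ∈ s, |x n| := by
  refine Finset.sum_subset h fun n _ hn => ?_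
  simp [Finsupp.notMem_support_iff.mp hn]

lemma abs_le_l1 (x : ℕ →₀ ℝ) (n : ℕ) : |x n| ≤ l1 x := by
  by_cases h : n ∈ x.support
  · exact Finset.single_le_sum (f := fun n => |x n|) (fun _ _ => abs_nonneg _) h
  · simpa [Finsupp.notMem_support_iff.mp h] using l1_nonneg x

lemma l1_zero : l1 (0 : ℕ →₀ ℝ) = 0 := by simp [l1]

lemma restr_apply (E : Finset ℕ) (x : ℕ →₀ ℝ) (n : ℕ) :
    restr E x n = if n ∈ E then x n else 0 := by
  simp [restr, Finsupp.filter_apply]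

lemma restr_smul (E : Finset ℕ) (c : ℝ) (x : ℕ →₀ ℝ) :
    restr E (c • x) = c • restr E x := by
  simp [restr, Finsupp.filter_smul]

lemma restr_add (E : Finset ℕ) (x y : ℕ →₀ ℝ) :
    restr E (x + y) = restr E x + restr E y := by
  simp [restr, Finsupp.filter_add]

lemma restr_zero (E : Finset ℕ) : restr E (0 : ℕ →₀ ℝ) = 0 := by
  ext n; simp [restr_apply]

lemma restr_sum (E : Finset ℕ) {ι : Type*} (s : Finset ι) (f : ι → (ℕ →₀ ℝ)) :
    restr E (∑ i ∈ s, f i) = ∑ i ∈ s, restr E (f i) := by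
  classical
  induction s using Finset.induction with
  | empty => simp [restr_zero]
  | insert _ _ h ih => rw [Finset.sum_insert h, Finset.sum_insert h, restr_add, ih]

lemma restr_restr (A B : Finset ℕ) (x : ℕ →₀ ℝ) :
    restr A (restr B x) = restr (A ∩ B) x := by
  ext n
  simp only [restr_apply, Finset.mem_inter]
  by_cases h1 : n ∈ A <;> by_cases h2 : n ∈ B <;> simp [h1, h2]

lemma restr_eq_self {E : Finset ℕ} {x : ℕ →₀ ℝ} (h : ∀ n ∈ x.support, n ∈ E) :
    restr E x = x := by
  ext n
  rw [restr_apply]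
  by_cases hn : n ∈ E
  · simp [hn]
  · simp only [hn, if_false]
    by_cases hs : n ∈ x.support
    · exact absurd (h n hs) hn
    · exact (Finsupp.notMem_support_iff.mp hs).symm

lemma restr_congr_of_support {E F : Finset ℕ} {x : ℕ →₀ ℝ}
    (h : ∀ n ∈ x.support, (n ∈ E ↔ n ∈ F)) : restr E x = restr F x := by
  ext n
  rw [restr_apply, restr_apply]
  by_cases hs : n ∈ x.support
  · exact if_congr (h n hs) rfl rfl
  · have : x n = 0 := Finsupp.notMem_support_iff.mp hs
    simp [this]

lemma restr_eq_zero {E : Finset ℕ} {x : ℕ →₀ ℝ} (h : ∀ n ∈ x.support, n ∉ E) :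
    restr E x = 0 := by
  ext n
  rw [restr_apply]
  by_cases hn : n ∈ E
  · by_cases hs : n ∈ x.support
    · exact absurd hn (h n hs)
    · simp [hn, Finsupp.notMem_support_iff.mp hs]
  · simp [hn]

lemma restr_empty (x : ℕ →₀ ℝ) : restr ∅ x = 0 :=
  restr_eq_zero (by simp)

lemma l1_restr (E : Finset ℕ) (x : ℕ →₀ ℝ) :
    l1 (restr E x) = ∑ n ∈ x.support.filter (· ∈ E), |x n| := by
  have hsupp : (restr E x).support = x.support.filter (· ∈ E) := by
    simp [restr, Finsupp.support_filter]
  rw [l1, hsupp]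
  refine Finset.sum_congr rfl fun n hn => ?_
  rw [restr_apply, if_pos (Finset.mem_filter.mp hn).2]

lemma l1_restr_le (E : Finset ℕ) (x : ℕ →₀ ℝ) : l1 (restr E x) ≤ l1 x := by
  rw [l1_restr, l1]
  exact Finset.sum_le_sum_of_subset_of_nonneg (Finset.filter_subset _ _)
    (fun _ _ _ => abs_nonneg _)

lemma sum_l1_restr_le {ι : Type*} [DecidableEq ι] (s : Finset ι) (F : ι → Finset ℕ)
    (hdis : ∀ i ∈ s, ∀ j ∈ s, i ≠ j → Disjoint (F i) (F j)) (x : ℕ →₀ ℝ) :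
    ∑ i ∈ s, l1 (restr (F i) x) ≤ l1 x := by
  classical
  have : ∑ i ∈ s, l1 (restr (F i) x) =
      ∑ n ∈ s.biUnion (fun i => x.support.filter (· ∈ F i)), |x n| := by
    rw [Finset.sum_biUnion]
    · exact Finset.sum_congr rfl fun i _ => l1_restr _ _
    · intro i hi j hj hij
      have := hdis i hi j hj hij
      simp only [Finset.disjoint_left] at this ⊢
      intro a ha hb
      exact this (Finset.mem_filter.mp ha).2 (Finset.mem_filter.mp hb).2
  rw [this, l1]
  refine Finset.sum_le_sum_of_subset_of_nonneg ?_ (fun _ _ _ => abs_nonneg _)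
  intro n hn
  obtain ⟨i, _, hni⟩ := Finset.mem_biUnion.mp hn
  exact (Finset.mem_filter.mp hni).1

/-! ### Section 2 : Admissible basics -/

lemma Admissible.pairwise_disjoint {q : ℕ} {Es : Fin q → Finset ℕ}
    (adm : Admissible q Es) {i j : Fin q} (hij : i ≠ j) : Disjoint (Es i) (Es j) := by
  rcases lt_or_gt_of_ne hij with h | h
  · rw [Finset.disjoint_left]
    intro a hai haj
    exact lt_irrefl a (adm.2.2.2 i j h a hai a haj)
  · rw [Finset.disjoint_left]
    intro a hai haj
    exact lt_irrefl a (adm.2.2.2 j i h a haj a hai)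

def tsirSet (k : ℕ) (x : ℕ →₀ ℝ) : Set ℝ :=
  { r : ℝ | ∃ n : ℕ, ∃ Es : Fin n → Finset ℕ, Admissible n Es ∧
      r = (1 / 2) * ∑ i, tsir k (restr (Es i) x) }

lemma tsir_succ (k : ℕ) (x : ℕ →₀ ℝ) :
    tsir (k + 1) x = max (tsir k x) (sSup (tsirSet k x)) := rfl

lemma adm_one : Admissible 1 (fun _ : Fin 1 => ({1} : Finset ℕ)) := by
  refine ⟨one_pos, fun _ => ⟨1, by simp⟩, ?_, ?_⟩
  · intro i a ha
    simp only [Finset.mem_singleton] at ha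
    omega
  · intro i j hij
    exact absurd hij (by omega)

lemma tsirSet_nonempty (k : ℕ) (x : ℕ →₀ ℝ) : (tsirSet k x).Nonempty :=
  ⟨_, 1, fun _ => ({1} : Finset ℕ), adm_one, rfl⟩

/-! ### Section 3 : tsir basics -/

lemma tsir_le_l1 (k : ℕ) (x : ℕ →₀ ℝ) : tsir k x ≤ l1 x := by
  induction k generalizing x with
  | zero => exact ciSup_le fun n => abs_le_l1 x n
  | succ k ih =>
    rw [tsir_succ]
    refine max_le (ih x) (csSup_le (tsirSet_nonempty k x) ?_)
    rintro r ⟨q, Es, adm, rfl⟩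
    have h1 : ∑ i, tsir k (restr (Es i) x) ≤ ∑ i, l1 (restr (Es i) x) :=
      Finset.sum_le_sum fun i _ => ih _
    have h2 : ∑ i : Fin q, l1 (restr (Es i) x) ≤ l1 x := by
      refine sum_l1_restr_le Finset.univ Es ?_ x
      intro i _ j _ hij
      exact adm.pairwise_disjoint hij
    calc (1/2 : ℝ) * ∑ i, tsir k (restr (Es i) x) ≤ (1/2) * l1 x := by
          rw [mul_le_mul_iff_right₀ (by norm_num : (0:ℝ) < 1/2)] at *
          exact le_trans h1 h2
      _ ≤ l1 x := by nlinarith [l1_nonneg x]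

lemma bddAbove_tsirSet (k : ℕ) (x : ℕ →₀ ℝ) : BddAbove (tsirSet k x) := by
  refine ⟨l1 x, ?_⟩
  rintro r ⟨q, Es, adm, rfl⟩
  have h1 : ∑ i, tsir k (restr (Es i) x) ≤ ∑ i, l1 (restr (Es i) x) :=
    Finset.sum_le_sum fun i _ => tsir_le_l1 k _
  have h2 : ∑ i : Fin q, l1 (restr (Es i) x) ≤ l1 x := by
    refine sum_l1_restr_le Finset.univ Es ?_ x
    intro i _ j _ hij
    exact adm.pairwise_disjoint hij
  have := le_trans h1 h2
  nlinarith [l1_nonneg x]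

lemma bddAbove_abs_range (x : ℕ →₀ ℝ) : BddAbove (Set.range fun n => |x n|) := by
  refine ⟨l1 x, ?_⟩
  rintro r ⟨n, rfl⟩
  exact abs_le_l1 x n

lemma abs_le_tsir0 (x : ℕ →₀ ℝ) (n : ℕ) : |x n| ≤ tsir 0 x :=
  le_ciSup (bddAbove_abs_range x) n

lemma tsir_nonneg (k : ℕ) (x : ℕ →₀ ℝ) : 0 ≤ tsir k x := by
  induction k with
  | zero => exact le_trans (abs_nonneg _) (abs_le_tsir0 x 0)
  | succ k ih => exact le_trans ih (le_max_left _ _)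

lemma tsir0_le {x : ℕ →₀ ℝ} {c : ℝ} (h : ∀ n, |x n| ≤ c) : tsir 0 x ≤ c :=
  ciSup_le h

lemma tsir_mono_depth (k : ℕ) (x : ℕ →₀ ℝ) : tsir k x ≤ tsir (k + 1) x :=
  le_max_left _ _

lemma le_tsir_of_admissible {q k : ℕ} {Es : Fin q → Finset ℕ} (adm : Admissible q Es)
    (x : ℕ →₀ ℝ) :
    (1/2 : ℝ) * ∑ i, tsir k (restr (Es i) x) ≤ tsir (k + 1) x := by
  rw [tsir_succ]
  exact le_trans (le_csSup (bddAbove_tsirSet k x) ⟨q, Es, adm, rfl⟩) (le_max_right _ _)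

lemma tsir_smul_le (k : ℕ) {c : ℝ} (hc : 0 ≤ c) (x : ℕ →₀ ℝ) :
    tsir k (c • x) ≤ c * tsir k x := by
  induction k generalizing x with
  | zero =>
    refine tsir0_le fun n => ?_
    rw [Finsupp.smul_apply, smul_eq_mul, abs_mul, abs_of_nonneg hc]
    exact mul_le_mul_of_nonneg_left (abs_le_tsir0 x n) hc
  | succ k ih =>
    rw [tsir_succ]
    refine max_le (le_trans (ih x) (mul_le_mul_of_nonneg_left (tsir_mono_depth k x) hc))
      (csSup_le (tsirSet_nonempty _ _) ?_)
    rintro r ⟨q, Es, adm, rfl⟩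
    have h1 : ∀ i : Fin q, tsir k (restr (Es i) (c • x)) ≤ c * tsir k (restr (Es i) x) := by
      intro i
      rw [restr_smul]
      exact ih _
    calc (1/2 : ℝ) * ∑ i, tsir k (restr (Es i) (c • x))
        ≤ (1/2) * ∑ i, c * tsir k (restr (Es i) x) := by
          refine mul_le_mul_of_nonneg_left (Finset.sum_le_sum fun i _ => h1 i) (by norm_num)
      _ = c * ((1/2) * ∑ i, tsir k (restr (Es i) x)) := by
          rw [← Finset.mul_sum]; ring
      _ ≤ c * tsir (k+1) x :=
          mul_le_mul_of_nonneg_left (le_tsir_of_admissible adm x) hc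

lemma tsir_smul (k : ℕ) {c : ℝ} (hc : 0 < c) (x : ℕ →₀ ℝ) :
    tsir k (c • x) = c * tsir k x := by
  refine le_antisymm (tsir_smul_le k hc.le x) ?_
  have h2 : tsir k x ≤ c⁻¹ * tsir k (c • x) := by
    have := tsir_smul_le k (inv_nonneg.mpr hc.le) (c • x)
    rwa [smul_smul, inv_mul_cancel₀ hc.ne', one_smul] at this
  calc c * tsir k x ≤ c * (c⁻¹ * tsir k (c • x)) := mul_le_mul_of_nonneg_left h2 hc.le
    _ = tsir k (c • x) := by field_simp

lemma tsir_add_le (k : ℕ) (x y : ℕ →₀ ℝ) : tsir k (x + y) ≤ tsir k x + tsir k y := by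
  induction k generalizing x y with
  | zero =>
    refine tsir0_le fun n => ?_
    calc |(x + y) n| ≤ |x n| + |y n| := by rw [Finsupp.add_apply]; exact abs_add_le _ _
      _ ≤ tsir 0 x + tsir 0 y := add_le_add (abs_le_tsir0 x n) (abs_le_tsir0 y n)
  | succ k ih =>
    rw [tsir_succ]
    refine max_le (le_trans (ih x y)
      (add_le_add (tsir_mono_depth k x) (tsir_mono_depth k y)))
      (csSup_le (tsirSet_nonempty _ _) ?_)
    rintro r ⟨q, Es, adm, rfl⟩
    have h1 : ∀ i : Fin q, tsir k (restr (Es i) (x + y))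
        ≤ tsir k (restr (Es i) x) + tsir k (restr (Es i) y) := by
      intro i
      rw [restr_add]
      exact ih _ _
    calc (1/2 : ℝ) * ∑ i, tsir k (restr (Es i) (x + y))
        ≤ (1/2) * ∑ i, (tsir k (restr (Es i) x) + tsir k (restr (Es i) y)) :=
          mul_le_mul_of_nonneg_left (Finset.sum_le_sum fun i _ => h1 i) (by norm_num)
      _ = (1/2) * ∑ i, tsir k (restr (Es i) x) + (1/2) * ∑ i, tsir k (restr (Es i) y) := by
          rw [Finset.sum_add_distrib]; ring
      _ ≤ tsir (k+1) x + tsir (k+1) y :=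
          add_le_add (le_tsir_of_admissible adm x) (le_tsir_of_admissible adm y)

lemma tsir_zero_vec (k : ℕ) : tsir k (0 : ℕ →₀ ℝ) = 0 :=
  le_antisymm (by simpa [l1_zero] using tsir_le_l1 k 0) (tsir_nonneg k 0)

lemma tsir_sum_le (k : ℕ) {ι : Type*} (s : Finset ι) (f : ι → (ℕ →₀ ℝ)) :
    tsir k (∑ i ∈ s, f i) ≤ ∑ i ∈ s, tsir k (f i) := by
  classical
  induction s using Finset.induction with
  | empty => simp [tsir_zero_vec]
  | insert _ _ h ih =>
    rw [Finset.sum_insert h, Finset.sum_insert h]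
    exact le_trans (tsir_add_le _ _ _) (add_le_add_right ih _)

/-! ### Section 4 : reassembly -/

lemma sum_tsir_inter_le (k q : ℕ) (Es : Fin q → Finset ℕ) (adm : Admissible q Es)
    (C : Finset ℕ) (y : ℕ →₀ ℝ) :
    (1/2 : ℝ) * ∑ i, tsir k (restr (Es i ∩ C) y) ≤ tsir (k + 1) (restr C y) := by
  classical
  set T : Finset (Fin q) := Finset.univ.filter (fun i => (Es i ∩ C).Nonempty) with hT
  by_cases hTe : T = ∅
  · have hz : ∀ i : Fin q, tsir k (restr (Es i ∩ C) y) = 0 := by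
      intro i
      have : ¬ (Es i ∩ C).Nonempty := by
        intro hne
        have : i ∈ T := by simp [hT, hne]
        simp [hTe] at this
      rw [Finset.not_nonempty_iff_eq_empty.mp this, restr_empty, tsir_zero_vec]
    rw [Finset.sum_congr rfl (fun i _ => hz i)]
    simpa using tsir_nonneg (k+1) (restr C y)
  · have hTne : T.Nonempty := Finset.nonempty_of_ne_empty hTe
    set q' : ℕ := T.card with hq'
    have hq'pos : 0 < q' := Finset.card_pos.mpr hTne
    set e := T.orderIsoOfFin (rfl : T.card = q') with he
    set Es' : Fin q' → Finset ℕ := fun i => Es (e i) ∩ C with hEs'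
    have hq'q : q' ≤ q := by
      calc q' = T.card := rfl
        _ ≤ (Finset.univ : Finset (Fin q)).card := Finset.card_le_card (Finset.subset_univ T)
        _ = q := by simp
    have adm' : Admissible q' Es' := by
      refine ⟨hq'pos, ?_, ?_, ?_⟩
      · intro i
        have : (e i : Fin q) ∈ T := (e i).2
        simpa [hT, hEs'] using (Finset.mem_filter.mp this).2
      · intro i a ha
        have haE : a ∈ Es (e i) := (Finset.mem_inter.mp ha).1
        exact le_trans hq'q (adm.2.2.1 _ a haE)
      · intro i j hij a ha b hb
        have hei : (e i : Fin q) < (e j : Fin q) := by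
          have := (OrderIso.lt_iff_lt e).mpr hij
          exact this
        exact adm.2.2.2 _ _ hei a (Finset.mem_inter.mp ha).1 b (Finset.mem_inter.mp hb).1
    have hsum : ∑ i : Fin q, tsir k (restr (Es i ∩ C) y)
        = ∑ j : Fin q', tsir k (restr (Es' j) y) := by
      have h1 : ∑ i : Fin q, tsir k (restr (Es i ∩ C) y)
          = ∑ i ∈ T, tsir k (restr (Es i ∩ C) y) := by
        symm
        refine Finset.sum_subset (Finset.subset_univ T) ?_
        intro i _ hi
        have : ¬ (Es i ∩ C).Nonempty := by
          intro hne
          exact hi (by simp [hT, hne])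
        rw [Finset.not_nonempty_iff_eq_empty.mp this, restr_empty, tsir_zero_vec]
      rw [h1]
      rw [← Finset.sum_coe_sort T (fun i => tsir k (restr (Es i ∩ C) y))]
      rw [← Equiv.sum_comp e.toEquiv (fun i : T => tsir k (restr (Es (i : Fin q) ∩ C) y))]
      rfl
    rw [hsum]
    have hwit : ∀ j : Fin q', restr (Es' j) y = restr (Es' j) (restr C y) := by
      intro j
      rw [restr_restr]
      congr 1
      rw [hEs']
      simp [Finset.inter_assoc]
    rw [Finset.sum_congr rfl (fun j _ => by rw [hwit j])]
    exact le_tsir_of_admissible adm' (restr C y)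

/-! ### Section 5 : the construction -/

def FF : ℕ → ℕ → ℕ
  | 0 => fun a => a + 1
  | (ℓ+1) => fun a => (FF ℓ)^[a] a

noncomputable def zz : ℕ → ℕ → (ℕ →₀ ℝ)
  | 0, m => Finsupp.single m 1
  | (ℓ+1), m => ((m : ℝ)⁻¹) • ∑ j ∈ Finset.range m, zz ℓ ((FF ℓ)^[j] m)

lemma FF_iter_ge (ℓ : ℕ) (hFF : ∀ a : ℕ, 1 ≤ a → a < FF ℓ a) :
    ∀ (a j : ℕ), 1 ≤ a → a + j ≤ (FF ℓ)^[j] a := by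
  intro a j ha
  induction j with
  | zero => simp
  | succ j ih =>
    rw [Function.iterate_succ_apply']
    have h1 : 1 ≤ (FF ℓ)^[j] a := le_trans (by omega) ih
    have := hFF _ h1
    omega

lemma FF_lt (ℓ : ℕ) : ∀ a : ℕ, 1 ≤ a → a < FF ℓ a := by
  induction ℓ with
  | zero => intro a _; simp [FF]
  | succ ℓ ih =>
    intro a ha
    have := FF_iter_ge ℓ ih a a ha
    show a < (FF ℓ)^[a] a
    omega

lemma FF_iter_ge' (ℓ : ℕ) (a j : ℕ) (ha : 1 ≤ a) : a + j ≤ (FF ℓ)^[j] a :=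
  FF_iter_ge ℓ (FF_lt ℓ) a j ha

lemma FF_double (ℓ : ℕ) (a : ℕ) (ha : 1 ≤ a) : 2 * a ≤ FF (ℓ+1) a := by
  have := FF_iter_ge' ℓ a a ha
  show 2 * a ≤ (FF ℓ)^[a] a
  omega

-- In context: μ j = (FF ℓ)^[j] m
lemma mu_ge (ℓ m j : ℕ) (hm : 1 ≤ m) : m ≤ (FF ℓ)^[j] m := by
  have := FF_iter_ge' ℓ m j hm
  omega

lemma mu_one_le (ℓ m j : ℕ) (hm : 1 ≤ m) : 1 ≤ (FF ℓ)^[j] m :=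
  le_trans hm (mu_ge ℓ m j hm)

lemma mu_succ (ℓ m j : ℕ) : (FF ℓ)^[j+1] m = FF ℓ ((FF ℓ)^[j] m) :=
  Function.iterate_succ_apply' _ _ _

lemma mu_strict_mono (ℓ m : ℕ) (hm : 1 ≤ m) {j j' : ℕ} (h : j < j') :
    (FF ℓ)^[j] m < (FF ℓ)^[j'] m := by
  induction j' with
  | zero => omega
  | succ j' ih =>
    rw [mu_succ]
    have h1 : (FF ℓ)^[j'] m < FF ℓ ((FF ℓ)^[j'] m) := FF_lt ℓ _ (mu_one_le ℓ m j' hm)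
    rcases Nat.lt_succ_iff_lt_or_eq.mp h with h' | h'
    · exact lt_trans (ih h') h1
    · rw [h']; exact h1

lemma mu_mono (ℓ m : ℕ) (hm : 1 ≤ m) {j j' : ℕ} (h : j ≤ j') :
    (FF ℓ)^[j] m ≤ (FF ℓ)^[j'] m := by
  rcases eq_or_lt_of_le h with h' | h'
  · rw [h']
  · exact (mu_strict_mono ℓ m hm h').le

lemma mu_double (ℓ m j : ℕ) (hm : 1 ≤ m) :
    2 * (FF (ℓ+1))^[j] m ≤ (FF (ℓ+1))^[j+1] m := by
  rw [mu_succ]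
  exact FF_double ℓ _ (mu_one_le (ℓ+1) m j hm)

lemma mu_pow_double (ℓ m : ℕ) (hm : 1 ≤ m) {j₁ j : ℕ} (h : j₁ ≤ j) :
    2 ^ (j - j₁) * (FF (ℓ+1))^[j₁] m ≤ (FF (ℓ+1))^[j] m := by
  induction j with
  | zero =>
    have : j₁ = 0 := by omega
    simp [this]
  | succ j ih =>
    rcases Nat.lt_succ_iff_lt_or_eq.mp (Nat.lt_succ_of_le h) with h' | h'
    · have hj₁j : j₁ ≤ j := by omega
      have h1 := ih hj₁j
      have h2 := mu_double ℓ m j hm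
      have h3 : j + 1 - j₁ = (j - j₁) + 1 := by omega
      rw [h3, pow_succ]
      calc 2 ^ (j - j₁) * 2 * (FF (ℓ+1))^[j₁] m
          = 2 * (2 ^ (j - j₁) * (FF (ℓ+1))^[j₁] m) := by ring
        _ ≤ 2 * (FF (ℓ+1))^[j] m := by omega
        _ ≤ (FF (ℓ+1))^[j+1] m := h2
    · rw [h']
      simp

lemma supp_zz (ℓ : ℕ) : ∀ m : ℕ, 1 ≤ m →
    (zz ℓ m).support ⊆ Finset.Ico m (FF ℓ m) := by
  induction ℓ with
  | zero =>
    intro m _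
    rw [zz]
    intro p hp
    have := Finsupp.support_single_subset hp
    simp only [Finset.mem_singleton] at this
    simp [this, FF]
  | succ ℓ ih =>
    intro m hm
    rw [zz]
    intro p hp
    have h1 := Finsupp.support_smul hp
    have h2 := Finsupp.support_finset_sum h1
    rw [Finset.mem_biUnion] at h2
    obtain ⟨j, hj, hpj⟩ := h2
    rw [Finset.mem_range] at hj
    have h3 := ih ((FF ℓ)^[j] m) (mu_one_le ℓ m j hm) hpj
    rw [Finset.mem_Ico] at h3 ⊢
    constructor
    · exact le_trans (mu_ge ℓ m j hm) h3.1
    · have : FF ℓ ((FF ℓ)^[j] m) ≤ FF (ℓ+1) m := by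
        rw [← mu_succ]
        show (FF ℓ)^[j+1] m ≤ (FF ℓ)^[m] m
        exact mu_mono ℓ m hm hj
      exact lt_of_lt_of_le h3.2 this

lemma supp_zz_block (ℓ m j : ℕ) (hm : 1 ≤ m) :
    (zz ℓ ((FF ℓ)^[j] m)).support ⊆
      Finset.Ico ((FF ℓ)^[j] m) ((FF ℓ)^[j+1] m) := by
  rw [mu_succ]
  exact supp_zz ℓ _ (mu_one_le ℓ m j hm)

lemma l1_smul {c : ℝ} (hc : 0 ≤ c) (x : ℕ →₀ ℝ) : l1 (c • x) = c * l1 x := by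
  have hsupp : (c • x).support ⊆ x.support := Finsupp.support_smul
  rw [l1_eq_sum_superset hsupp, l1, Finset.mul_sum]
  refine Finset.sum_congr rfl fun n _ => ?_
  rw [Finsupp.smul_apply, smul_eq_mul, abs_mul, abs_of_nonneg hc]

lemma l1_add_disjoint {x y : ℕ →₀ ℝ} (h : Disjoint x.support y.support) :
    l1 (x + y) = l1 x + l1 y := by
  have hsupp : (x + y).support ⊆ x.support ∪ y.support := Finsupp.support_add
  rw [l1_eq_sum_superset hsupp,
    l1_eq_sum_superset (Finset.subset_union_left : x.support ⊆ x.support ∪ y.support),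
    l1_eq_sum_superset (Finset.subset_union_right : y.support ⊆ x.support ∪ y.support),
    ← Finset.sum_add_distrib]
  refine Finset.sum_congr rfl fun n hn => ?_
  rw [Finsupp.add_apply]
  rcases Finset.mem_union.mp hn with h1 | h1
  · have : y n = 0 := Finsupp.notMem_support_iff.mp (Finset.disjoint_left.mp h h1)
    rw [this]; simp
  · by_cases h2 : n ∈ x.support
    · have : y n = 0 := Finsupp.notMem_support_iff.mp (Finset.disjoint_left.mp h h2)
      rw [this]; simp
    · have : x n = 0 := Finsupp.notMem_support_iff.mp h2
      rw [this]; simp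

lemma l1_sum_disjoint {ι : Type*} [DecidableEq ι] (s : Finset ι) (f : ι → (ℕ →₀ ℝ))
    (hdis : ∀ i ∈ s, ∀ j ∈ s, i ≠ j → Disjoint (f i).support (f j).support) :
    l1 (∑ i ∈ s, f i) = ∑ i ∈ s, l1 (f i) := by
  induction s using Finset.induction with
  | empty => simp [l1_zero]
  | @insert a s ha ih =>
    rw [Finset.sum_insert ha, Finset.sum_insert ha]
    have hd : Disjoint (f a).support (∑ i ∈ s, f i).support := by
      refine Finset.disjoint_left.mpr fun p hpa hps => ?_
      have := Finsupp.support_finset_sum hps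
      rw [Finset.mem_biUnion] at this
      obtain ⟨j, hj, hpj⟩ := this
      have hne : a ≠ j := fun h => ha (h ▸ hj)
      exact Finset.disjoint_left.mp
        (hdis a (Finset.mem_insert_self a s) j (Finset.mem_insert_of_mem hj) hne) hpa hpj
    rw [l1_add_disjoint hd, ih (fun i hi j hj hij =>
      hdis i (Finset.mem_insert_of_mem hi) j (Finset.mem_insert_of_mem hj) hij)]

lemma Ico_disjoint {a b c d : ℕ} (h : b ≤ c) :
    Disjoint (Finset.Ico a b) (Finset.Ico c d) := by
  refine Finset.disjoint_left.mpr fun p hp hq => ?_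
  rw [Finset.mem_Ico] at hp hq
  omega

lemma supp_zz_disjoint (ℓ m : ℕ) (hm : 1 ≤ m) {j j' : ℕ} (h : j ≠ j') :
    Disjoint (zz ℓ ((FF ℓ)^[j] m)).support (zz ℓ ((FF ℓ)^[j'] m)).support := by
  rcases Nat.lt_or_ge j j' with h' | h'
  · refine Finset.disjoint_of_subset_left (supp_zz_block ℓ m j hm)
      (Finset.disjoint_of_subset_right (supp_zz_block ℓ m j' hm) (Ico_disjoint ?_))
    exact mu_mono ℓ m hm h'
  · have h'' : j' < j := by omega
    refine Finset.disjoint_of_subset_left (supp_zz_block ℓ m j hm)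
      (Finset.disjoint_of_subset_right (supp_zz_block ℓ m j' hm) (Ico_disjoint ?_).symm)
    exact mu_mono ℓ m hm h''

lemma l1_zz (ℓ : ℕ) : ∀ m : ℕ, 1 ≤ m → l1 (zz ℓ m) = 1 := by
  induction ℓ with
  | zero =>
    intro m _
    rw [zz, l1]
    rw [Finsupp.support_single_ne_zero m (one_ne_zero)]
    simp
  | succ ℓ ih =>
    intro m hm
    rw [zz, l1_smul (by positivity)]
    rw [l1_sum_disjoint _ _ (fun i _ j _ hij => supp_zz_disjoint ℓ m hm hij)]
    rw [Finset.sum_congr rfl (fun j _ => ih _ (mu_one_le ℓ m j hm))]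
    simp
    rw [mul_comm]
    rw [mul_inv_cancel₀]
    positivity

lemma zz_block_restr (ℓ m j : ℕ) (hm : 1 ≤ m) (hj : j < m) :
    restr (Finset.Ico ((FF ℓ)^[j] m) ((FF ℓ)^[j+1] m)) (zz (ℓ+1) m)
      = (m : ℝ)⁻¹ • zz ℓ ((FF ℓ)^[j] m) := by
  rw [zz, restr_smul, restr_sum]
  congr 1
  rw [Finset.sum_eq_single j]
  · exact restr_eq_self fun n hn => supp_zz_block ℓ m j hm hn
  · intro b hb hbj
    refine restr_eq_zero fun n hn hmem => ?_
    have h1 := supp_zz_block ℓ m b hm hn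
    have : n ∈ Finset.Ico ((FF ℓ)^[b] m) ((FF ℓ)^[b+1] m) := h1
    rw [Finset.mem_Ico] at this hmem
    rcases Nat.lt_or_ge b j with h' | h'
    · have : (FF ℓ)^[b+1] m ≤ (FF ℓ)^[j] m := mu_mono ℓ m hm h'
      omega
    · have hbj' : j < b := by omega
      have : (FF ℓ)^[j+1] m ≤ (FF ℓ)^[b] m := mu_mono ℓ m hm hbj'
      omega
  · intro h
    exact absurd (Finset.mem_range.mpr hj) h

lemma zz_coord (ℓ : ℕ) : ∀ m : ℕ, 1 ≤ m → ∀ p : ℕ,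
    |(zz ℓ m) p| ≤ 1 / (m : ℝ) ^ ℓ := by
  induction ℓ with
  | zero =>
    intro m _ p
    rw [zz]
    simp only [pow_zero]
    rcases eq_or_ne p m with h | h
    · simp [h]
    · rw [Finsupp.single_apply, if_neg (fun h' => h h'.symm)]
      norm_num
  | succ ℓ ih =>
    intro m hm p
    rw [zz]
    rw [Finsupp.smul_apply, smul_eq_mul, abs_mul, abs_inv, Nat.abs_cast]
    have hmpos : (0:ℝ) < m := by exact_mod_cast hm
    have key : |(∑ j ∈ Finset.range m, zz ℓ ((FF ℓ)^[j] m)) p| ≤ 1 / (m:ℝ)^ℓ := by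
      rw [Finsupp.finset_sum_apply]
      by_cases hz : ∀ j ∈ Finset.range m, (zz ℓ ((FF ℓ)^[j] m)) p = 0
      · rw [Finset.sum_congr rfl hz]
        rw [Finset.sum_const_zero, abs_zero]
        positivity
      · push_neg at hz
        obtain ⟨j₀, hj₀m, hj₀⟩ := hz
        rw [Finset.sum_eq_single j₀]
        · calc |(zz ℓ ((FF ℓ)^[j₀] m)) p| ≤ 1 / ((FF ℓ)^[j₀] m : ℝ)^ℓ :=
              ih _ (mu_one_le ℓ m j₀ hm) p
            _ ≤ 1 / (m:ℝ)^ℓ := by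
              apply div_le_div_of_nonneg_left (by norm_num) (by positivity)
              exact pow_le_pow_left₀ (by positivity) (by exact_mod_cast mu_ge ℓ m j₀ hm) ℓ
        · intro b _ hbj₀
          by_contra hb
          have hpb : p ∈ (zz ℓ ((FF ℓ)^[b] m)).support := Finsupp.mem_support_iff.mpr hb
          have hpj₀ : p ∈ (zz ℓ ((FF ℓ)^[j₀] m)).support := Finsupp.mem_support_iff.mpr hj₀
          exact Finset.disjoint_left.mp (supp_zz_disjoint ℓ m hm hbj₀) hpb hpj₀
        · intro h; exact absurd hj₀m h
    calc (m:ℝ)⁻¹ * |(∑ j ∈ Finset.range m, zz ℓ ((FF ℓ)^[j] m)) p|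
        ≤ (m:ℝ)⁻¹ * (1 / (m:ℝ)^ℓ) := by
          exact mul_le_mul_of_nonneg_left key (by positivity)
      _ = 1 / (m:ℝ)^(ℓ+1) := by
          rw [pow_succ]
          field_simp

/-! ### Section 6 : lower bound -/

lemma tsir_zz_lower (ℓ : ℕ) : ∀ m : ℕ, 1 ≤ m → (1/2:ℝ)^ℓ ≤ tsir ℓ (zz ℓ m) := by
  induction ℓ with
  | zero =>
    intro m _
    rw [zz]
    have := abs_le_tsir0 (Finsupp.single m 1) m
    simpa using this
  | succ ℓ ih =>
    intro m hm
    set μ : ℕ → ℕ := fun j => (FF ℓ)^[j] m with hμ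
    set Es : Fin m → Finset ℕ := fun j => Finset.Ico (μ j) (μ (j+1)) with hEs
    have adm : Admissible m Es := by
      refine ⟨hm, ?_, ?_, ?_⟩
      · intro i
        refine Finset.nonempty_Ico.mpr ?_
        exact mu_strict_mono ℓ m hm (by omega)
      · intro i a ha
        rw [hEs, Finset.mem_Ico] at ha
        exact le_trans (mu_ge ℓ m i hm) ha.1
      · intro i j hij a ha b hb
        rw [hEs, Finset.mem_Ico] at ha hb
        have : μ (i+1) ≤ μ j := mu_mono ℓ m hm (by omega)
        omega
    have key := le_tsir_of_admissible (k := ℓ) adm (zz (ℓ+1) m)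
    refine le_trans ?_ key
    have hblock : ∀ i : Fin m, tsir ℓ (restr (Es i) (zz (ℓ+1) m))
        = (m:ℝ)⁻¹ * tsir ℓ (zz ℓ (μ i)) := by
      intro i
      rw [hEs]
      show tsir ℓ (restr (Finset.Ico ((FF ℓ)^[(i:ℕ)] m) ((FF ℓ)^[(i:ℕ)+1] m)) (zz (ℓ+1) m)) = _
      rw [zz_block_restr ℓ m i hm i.2]
      exact tsir_smul ℓ (by positivity) _
    have hmpos : (0:ℝ) < m := by exact_mod_cast hm
    have hsum : (1/2:ℝ) * ∑ i : Fin m, tsir ℓ (restr (Es i) (zz (ℓ+1) m))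
        ≥ (1/2) * ∑ i : Fin m, (m:ℝ)⁻¹ * (1/2)^ℓ := by
      refine mul_le_mul_of_nonneg_left (Finset.sum_le_sum fun i _ => ?_) (by norm_num)
      rw [hblock i]
      exact mul_le_mul_of_nonneg_left (ih (μ i) (mu_one_le ℓ m i hm)) (by positivity)
    refine le_trans ?_ hsum
    rw [Finset.sum_const, Finset.card_univ, Fintype.card_fin]
    rw [nsmul_eq_mul]
    rw [pow_succ]
    have : (m:ℝ) * ((m:ℝ)⁻¹ * (1/2)^ℓ) = (1/2)^ℓ := by field_simp
    rw [this]
    ring_nf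
    linarith [pow_nonneg (by norm_num : (0:ℝ) ≤ 1/2) ℓ]

/-! ### Section 7a : helpers for upper bound -/

lemma half_geom (n : ℕ) : ∑ t ∈ Finset.range n, (1/2:ℝ)^t ≤ 2 := by
  rw [geom_sum_eq (by norm_num : (1/2:ℝ) ≠ 1)]
  have h1 : (0:ℝ) ≤ (1/2:ℝ)^n := by positivity
  have h2 : ((1/2:ℝ)^n - 1)/((1/2) - 1) = 2*(1 - (1/2)^n) := by ring
  rw [h2]
  linarith

lemma one_le_half_pow_mul_four_pow {D ℓ : ℕ} (h : D ≤ 2*ℓ) :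
    (1:ℝ) ≤ (1/2)^D * 4^ℓ := by
  have h1 : ((2:ℝ))^D ≤ (2:ℝ)^(2*ℓ) := pow_le_pow_right₀ one_le_two h
  have h2 : ((2:ℝ))^(2*ℓ) = 4^ℓ := by
    rw [pow_mul]; norm_num
  have h3 : ((1/2:ℝ))^D = ((2:ℝ)^D)⁻¹ := by
    rw [one_div, inv_pow]
  rw [h3]
  rw [← h2]
  have hp : (0:ℝ) < (2:ℝ)^D := by positivity
  rw [inv_mul_eq_div, le_div_iff₀ hp, one_mul]
  exact h1

lemma mu_pow_double' (ℓ m : ℕ) (hℓ : 1 ≤ ℓ) (hm : 1 ≤ m) {j₁ j : ℕ} (h : j₁ ≤ j) :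
    2 ^ (j - j₁) * (FF ℓ)^[j₁] m ≤ (FF ℓ)^[j] m := by
  obtain ⟨ℓ', rfl⟩ : ∃ ℓ', ℓ = ℓ' + 1 := ⟨ℓ - 1, by omega⟩
  exact mu_pow_double ℓ' m hm h

lemma good_sum_bound (ℓ m q e : ℕ) (hℓ : 1 ≤ ℓ) (hm : 2 ≤ m) (he : 1 ≤ e) :
    ∑ j ∈ (Finset.range m).filter (fun j => q < (FF ℓ)^[j] m),
        (q:ℝ) / ((FF ℓ)^[j] m : ℝ)^e
      ≤ 2 / (m:ℝ)^(e-1) := by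
  classical
  set μ : ℕ → ℕ := fun j => (FF ℓ)^[j] m with hμ
  set S := (Finset.range m).filter (fun j => q < μ j) with hS
  by_cases hSne : S.Nonempty
  swap
  · rw [Finset.not_nonempty_iff_eq_empty.mp hSne]
    simp
    positivity
  set j₁ := S.min' hSne with hj₁
  have hj₁S : j₁ ∈ S := S.min'_mem hSne
  have hqμ : q < μ j₁ := (Finset.mem_filter.mp hj₁S).2
  have hterm : ∀ j ∈ S, (q:ℝ) / (μ j : ℝ)^e ≤ (1/2)^(j - j₁) * (1 / (m:ℝ)^(e-1)) := by
    intro j hj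
    have hj₁j : j₁ ≤ j := S.min'_le j hj
    have hdd : 2 ^ (j - j₁) * μ j₁ ≤ μ j := mu_pow_double' ℓ m hℓ (by omega) hj₁j
    have hμm : m ≤ μ j := mu_ge ℓ m j (by omega)
    have hμpos : (0:ℝ) < μ j := by
      have := mu_one_le ℓ m j (by omega)
      exact_mod_cast Nat.lt_of_lt_of_le Nat.zero_lt_one this
    have hμ₁pos : (0:ℝ) < μ j₁ := by
      have := mu_one_le ℓ m j₁ (by omega)
      exact_mod_cast Nat.lt_of_lt_of_le Nat.zero_lt_one this
    have hpow : ((2:ℝ)) ^ (j - j₁) * (μ j₁ : ℝ) * (m:ℝ)^(e-1) ≤ (μ j : ℝ)^e := by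
      have h1 : (μ j : ℝ)^e = (μ j : ℝ) * (μ j : ℝ)^(e-1) := by
        conv_lhs => rw [show e = 1 + (e-1) by omega]
        rw [pow_add, pow_one]
      rw [h1]
      have h2 : ((2:ℝ))^(j-j₁) * (μ j₁:ℝ) ≤ (μ j : ℝ) := by
        exact_mod_cast hdd
      have h3 : ((m:ℝ))^(e-1) ≤ (μ j:ℝ)^(e-1) :=
        pow_le_pow_left₀ (by positivity) (by exact_mod_cast hμm) _
      have h4 : (0:ℝ) ≤ (m:ℝ)^(e-1) := by positivity
      nlinarith [pow_pos hμpos (e-1)]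
    have hq1 : (q:ℝ) ≤ (μ j₁ : ℝ) := by
      have : q ≤ μ j₁ := hqμ.le
      exact_mod_cast this
    calc (q:ℝ) / (μ j : ℝ)^e
        ≤ (μ j₁:ℝ) / ((2:ℝ)^(j-j₁) * (μ j₁:ℝ) * (m:ℝ)^(e-1)) := by
          apply div_le_div₀ hμ₁pos.le hq1 (by positivity) hpow
      _ = (1/2)^(j - j₁) * (1 / (m:ℝ)^(e-1)) := by
          have hm0 : (0:ℝ) < (m:ℝ)^(e-1) := by
            have : (0:ℝ) < m := by exact_mod_cast (by omega : 0 < m)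
            positivity
          have h2p : (0:ℝ) < (2:ℝ)^(j-j₁) := by positivity
          rw [div_pow, one_pow]
          field_simp
  calc ∑ j ∈ S, (q:ℝ) / (μ j:ℝ)^e
      ≤ ∑ j ∈ S, (1/2:ℝ)^(j - j₁) * (1 / (m:ℝ)^(e-1)) := Finset.sum_le_sum hterm
    _ ≤ ∑ j ∈ Finset.Ico j₁ m, (1/2:ℝ)^(j - j₁) * (1 / (m:ℝ)^(e-1)) := by
        refine Finset.sum_le_sum_of_subset_of_nonneg ?_ (fun _ _ _ => by positivity)
        intro j hj
        rw [Finset.mem_Ico]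
        exact ⟨S.min'_le j hj, Finset.mem_range.mp (Finset.mem_filter.mp hj).1⟩
    _ = (∑ j ∈ Finset.Ico j₁ m, (1/2:ℝ)^(j - j₁)) * (1 / (m:ℝ)^(e-1)) := by
        rw [Finset.sum_mul]
    _ ≤ 2 * (1 / (m:ℝ)^(e-1)) := by
        refine mul_le_mul_of_nonneg_right ?_ (by positivity)
        rw [Finset.sum_Ico_eq_sum_range]
        refine le_trans (le_of_eq (Finset.sum_congr rfl fun t _ => ?_)) (half_geom (m - j₁))
        congr 1
        omega
    _ = 2 / (m:ℝ)^(e-1) := by ring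

lemma piece_decomp (ℓ m : ℕ) (hm : 1 ≤ m) (G : Finset ℕ) (D : ℕ) :
    tsir D (restr G (zz (ℓ+1) m)) ≤
      (m:ℝ)⁻¹ * ∑ j ∈ Finset.range m,
        tsir D (restr (G ∩ Finset.Ico ((FF ℓ)^[j] m) ((FF ℓ)^[j+1] m))
          (zz ℓ ((FF ℓ)^[j] m))) := by
  have hdec : restr G (zz (ℓ+1) m) = (m:ℝ)⁻¹ •
      ∑ j ∈ Finset.range m,
        restr (G ∩ Finset.Ico ((FF ℓ)^[j] m) ((FF ℓ)^[j+1] m)) (zz ℓ ((FF ℓ)^[j] m)) := by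
    rw [zz, restr_smul, restr_sum]
    congr 1
    refine Finset.sum_congr rfl fun j _ => ?_
    refine restr_congr_of_support fun n hn => ?_
    have hB := supp_zz_block ℓ m j hm hn
    rw [Finset.mem_inter]
    exact ⟨fun h => ⟨h, hB⟩, fun h => h.1⟩
  rw [hdec, tsir_smul D (by positivity : (0:ℝ) < (m:ℝ)⁻¹)]
  exact mul_le_mul_of_nonneg_left (tsir_sum_le D _ _) (by positivity)

/-! ### Section 7b : elements of Es are ≥ q ; unique bad engaged block -/

lemma bad_engaged_unique (ℓ m q : ℕ) (hm : 1 ≤ m) (Es : Fin q → Finset ℕ)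
    (hEs : ∀ i, ∀ a ∈ Es i, q ≤ a) (E : Finset ℕ) {j j' : ℕ}
    (hbj' : (FF ℓ)^[j'] m ≤ q)
    (hej : ∃ i, ((Es i ∩ E) ∩
      Finset.Ico ((FF ℓ)^[j] m) ((FF ℓ)^[j+1] m)).Nonempty)
    (hjj' : j < j') : False := by
  obtain ⟨i, a, ha⟩ := hej
  rw [Finset.mem_inter, Finset.mem_inter, Finset.mem_Ico] at ha
  have h1 : q ≤ a := hEs i a ha.1.1
  have h2 : (FF ℓ)^[j+1] m ≤ (FF ℓ)^[j'] m := mu_mono ℓ m hm (by omega)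
  omega

/-! ### Section 7c : the upper bound -/

theorem upperA : ∀ L d e m : ℕ, d + e = L → 1 ≤ e → 2 ≤ m → ∀ E : Finset ℕ,
    tsir d (restr E (zz L m)) ≤ (1/2:ℝ)^d * 4^L / (m:ℝ)^e := by
  intro L
  induction L using Nat.strong_induction_on with
  | _ L IHL =>
  intro d
  induction d using Nat.strong_induction_on with
  | _ d IHd =>
  intro e m hde he hm E
  have hmpos : (0:ℝ) < m := by
    have : 0 < m := by omega
    exact_mod_cast this
  rcases d with _ | D
  · -- depth 0 : coordinate bound
    obtain rfl : e = L := by omega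
    refine tsir0_le fun p => ?_
    have h1 : |restr E (zz e m) p| ≤ |(zz e m) p| := by
      rw [restr_apply]
      split
      · exact le_refl _
      · simp
    have h2 := zz_coord e m (by omega) p
    have h3 : (1:ℝ)/(m:ℝ)^e ≤ (1/2:ℝ)^0 * 4^e/(m:ℝ)^e := by
      rw [pow_zero, one_mul]
      apply div_le_div_of_nonneg_right ?_ (by positivity)
      exact one_le_pow₀ (by norm_num)
    exact le_trans (le_trans h1 h2) h3
  · -- depth D+1
    obtain rfl : L = (D + e) + 1 := by omega
    set ℓ : ℕ := D + e with hℓdef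
    have hℓ1 : 1 ≤ ℓ := by omega
    have hℓlt : ℓ < ℓ + 1 := by omega
    rw [tsir_succ]
    apply max_le
    · -- monotone side, use inner IH at (D, e+1)
      have hIH := IHd D (by omega) (e+1) m (by omega) (by omega) hm E
      refine le_trans hIH ?_
      have hsplit : (1/2:ℝ)^D * 4^(ℓ+1)/(m:ℝ)^(e+1)
          = ((1/2:ℝ)^D * 4^(ℓ+1)/(m:ℝ)^e) * (1/(m:ℝ)) := by
        rw [pow_succ]
        field_simp
        ring
      rw [hsplit]
      have h2 : (1/(m:ℝ)) ≤ 1/2 := by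
        apply div_le_div_of_nonneg_left (by norm_num) (by norm_num)
        exact_mod_cast hm
      calc ((1/2:ℝ)^D * 4^(ℓ+1)/(m:ℝ)^e) * (1/(m:ℝ))
          ≤ ((1/2:ℝ)^D * 4^(ℓ+1)/(m:ℝ)^e) * (1/2) :=
            mul_le_mul_of_nonneg_left h2 (by positivity)
        _ = (1/2:ℝ)^(D+1) * 4^(ℓ+1)/(m:ℝ)^e := by
            rw [pow_succ]
            ring
    · -- the sup side
      refine csSup_le (tsirSet_nonempty _ _) ?_
      rintro r ⟨q, Es, adm, rfl⟩
      classical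
      set μ : ℕ → ℕ := fun j => (FF ℓ)^[j] m with hμ
      set B : ℕ → Finset ℕ := fun j => Finset.Ico (μ j) (μ (j+1)) with hB
      set Q : Fin q → ℕ → ℝ :=
        fun i j => tsir D (restr ((Es i ∩ E) ∩ B j) (zz ℓ (μ j))) with hQ
      have hQnn : ∀ i j, 0 ≤ Q i j := fun i j => tsir_nonneg _ _
      have hμ2 : ∀ j, 2 ≤ μ j := fun j => le_trans hm (mu_ge ℓ m j (by omega))
      have hμpos : ∀ j, (0:ℝ) < μ j := fun j => by
        have := hμ2 j
        have : 0 < μ j := by omega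
        exact_mod_cast this
      -- step 1+2 : per piece decomposition
      have hstep2 : ∀ i : Fin q, tsir D (restr (Es i) (restr E (zz (ℓ+1) m)))
          ≤ (m:ℝ)⁻¹ * ∑ j ∈ Finset.range m, Q i j := by
        intro i
        rw [restr_restr]
        exact piece_decomp ℓ m (by omega) (Es i ∩ E) D
      have hr1 : (1/2:ℝ) * ∑ i, tsir D (restr (Es i) (restr E (zz (ℓ+1) m)))
          ≤ (1/2:ℝ) * (m:ℝ)⁻¹ * (∑ j ∈ Finset.range m, ∑ i, Q i j) := by
        calc (1/2:ℝ) * ∑ i, tsir D (restr (Es i) (restr E (zz (ℓ+1) m)))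
            ≤ (1/2:ℝ) * ∑ i : Fin q, (m:ℝ)⁻¹ * ∑ j ∈ Finset.range m, Q i j :=
              mul_le_mul_of_nonneg_left (Finset.sum_le_sum fun i _ => hstep2 i) (by norm_num)
          _ = (1/2:ℝ) * (m:ℝ)⁻¹ * (∑ i : Fin q, ∑ j ∈ Finset.range m, Q i j) := by
              rw [← Finset.mul_sum]
              ring
          _ = (1/2:ℝ) * (m:ℝ)⁻¹ * (∑ j ∈ Finset.range m, ∑ i, Q i j) := by
              rw [Finset.sum_comm]
      -- split into good and bad blocks
      set good := (Finset.range m).filter (fun j => q < μ j) with hgoodset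
      set bad := (Finset.range m).filter (fun j => ¬ q < μ j) with hbadset
      have hsplitgb : ∑ j ∈ Finset.range m, ∑ i, Q i j
          = (∑ j ∈ good, ∑ i, Q i j) + (∑ j ∈ bad, ∑ i, Q i j) :=
        (Finset.sum_filter_add_sum_filter_not _ _ _).symm
      -- good bound
      have hgood : ∑ j ∈ good, ∑ i, Q i j
          ≤ (1/2:ℝ)^D * 4^ℓ * (2/(m:ℝ)^(e-1)) := by
        have hterm : ∀ j ∈ good, ∑ i, Q i j
            ≤ ((1/2:ℝ)^D * 4^ℓ) * ((q:ℝ)/(μ j:ℝ)^e) := by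
          intro j _
          have hone : ∀ i : Fin q, Q i j ≤ (1/2:ℝ)^D * 4^ℓ / (μ j:ℝ)^e := by
            intro i
            exact IHL ℓ hℓlt D e (μ j) (by omega) he (hμ2 j) _
          calc ∑ i, Q i j ≤ ∑ _i : Fin q, ((1/2:ℝ)^D * 4^ℓ / (μ j:ℝ)^e) :=
                Finset.sum_le_sum fun i _ => hone i
            _ = (q:ℝ) * ((1/2:ℝ)^D * 4^ℓ / (μ j:ℝ)^e) := by
                rw [Finset.sum_const, Finset.card_univ, Fintype.card_fin, nsmul_eq_mul]
            _ = ((1/2:ℝ)^D * 4^ℓ) * ((q:ℝ)/(μ j:ℝ)^e) := by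
                ring
        calc ∑ j ∈ good, ∑ i, Q i j
            ≤ ∑ j ∈ good, ((1/2:ℝ)^D * 4^ℓ) * ((q:ℝ)/(μ j:ℝ)^e) :=
              Finset.sum_le_sum hterm
          _ = ((1/2:ℝ)^D * 4^ℓ) * ∑ j ∈ good, (q:ℝ)/(μ j:ℝ)^e := by
              rw [Finset.mul_sum]
          _ ≤ ((1/2:ℝ)^D * 4^ℓ) * (2/(m:ℝ)^(e-1)) := by
              refine mul_le_mul_of_nonneg_left ?_ (by positivity)
              exact good_sum_bound ℓ m q e hℓ1 hm he
      -- bad part : at most one engaged block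
      set engaged : ℕ → Prop := fun j => ∃ i : Fin q, ((Es i ∩ E) ∩ B j).Nonempty
        with hengaged
      have hQz : ∀ j, ¬ engaged j → ∀ i, Q i j = 0 := by
        intro j hj i
        have : ¬ ((Es i ∩ E) ∩ B j).Nonempty := fun hne => hj ⟨i, hne⟩
        rw [hQ]
        show tsir D (restr ((Es i ∩ E) ∩ B j) (zz ℓ (μ j))) = 0
        rw [Finset.not_nonempty_iff_eq_empty.mp this, restr_empty, tsir_zero_vec]
      set badeng := bad.filter engaged with hbe
      have hbadsum : ∑ j ∈ bad, ∑ i, Q i j = ∑ j ∈ badeng, ∑ i, Q i j := by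
        symm
        refine Finset.sum_subset (Finset.filter_subset _ _) ?_
        intro j hj hnj
        have : ¬ engaged j := fun hen => hnj (Finset.mem_filter.mpr ⟨hj, hen⟩)
        rw [Finset.sum_congr rfl (fun i _ => hQz j this i), Finset.sum_const_zero]
      have huniq : ∀ j ∈ badeng, ∀ j' ∈ badeng, j = j' := by
        intro j hj j' hj'
        by_contra hne
        have hjbad := Finset.mem_filter.mp (Finset.mem_filter.mp hj).1
        have hj'bad := Finset.mem_filter.mp (Finset.mem_filter.mp hj').1
        have hjeng := (Finset.mem_filter.mp hj).2
        have hj'eng := (Finset.mem_filter.mp hj').2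
        rcases Nat.lt_or_ge j j' with hlt | hge
        · exact bad_engaged_unique ℓ m q (by omega) Es adm.2.2.1 E
            (by omega : μ j' ≤ q) hjeng hlt
        · have hlt' : j' < j := by omega
          exact bad_engaged_unique ℓ m q (by omega) Es adm.2.2.1 E
            (by omega : μ j ≤ q) hj'eng hlt'
      -- now two cases on e
      rcases Nat.lt_or_ge e 2 with he1 | he2
      · -- e = 1
        obtain rfl : e = 1 := by omega
        have hbad : ∑ j ∈ bad, ∑ i, Q i j ≤ 1 := by
          rw [hbadsum]
          rcases Finset.eq_empty_or_nonempty badeng with hempty | ⟨j₀, hj₀⟩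
          · rw [hempty]
            simp
          · have : badeng = {j₀} :=
              Finset.eq_singleton_iff_unique_mem.mpr ⟨hj₀, fun j hj => huniq j hj j₀ hj₀⟩
            rw [this, Finset.sum_singleton]
            have hl1 : ∀ i : Fin q, Q i j₀
                ≤ l1 (restr ((Es i ∩ E) ∩ B j₀) (zz ℓ (μ j₀))) := fun i => tsir_le_l1 _ _
            calc ∑ i, Q i j₀ ≤ ∑ i, l1 (restr ((Es i ∩ E) ∩ B j₀) (zz ℓ (μ j₀))) :=
                  Finset.sum_le_sum fun i _ => hl1 i
              _ ≤ l1 (zz ℓ (μ j₀)) := by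
                  refine sum_l1_restr_le Finset.univ _ ?_ _
                  intro i _ i' _ hii'
                  refine Finset.disjoint_of_subset_left ?_
                    (Finset.disjoint_of_subset_right ?_ (adm.pairwise_disjoint hii'))
                  · exact le_trans Finset.inter_subset_left Finset.inter_subset_left
                  · exact le_trans Finset.inter_subset_left Finset.inter_subset_left
              _ = 1 := l1_zz ℓ (μ j₀) (by have := hμ2 j₀; omega)
        -- final arithmetic, e = 1
        set c4 : ℝ := (1/2:ℝ)^D * 4^ℓ with hc4
        have h1c : (1:ℝ) ≤ c4 := one_le_half_pow_mul_four_pow (by omega)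
        refine le_trans hr1 ?_
        rw [hsplitgb]
        have htot : (∑ j ∈ good, ∑ i, Q i j) + (∑ j ∈ bad, ∑ i, Q i j)
            ≤ c4 * 2 + 1 := by
          have h2 : (2:ℝ)/(m:ℝ)^(1-1) = 2 := by norm_num
          refine add_le_add ?_ hbad
          rw [← h2]
          exact le_trans hgood (by rw [hc4])
        calc (1/2:ℝ) * (m:ℝ)⁻¹ * ((∑ j ∈ good, ∑ i, Q i j) + (∑ j ∈ bad, ∑ i, Q i j))
            ≤ (1/2:ℝ) * (m:ℝ)⁻¹ * (c4 * 2 + 1) := by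
              refine mul_le_mul_of_nonneg_left htot (by positivity)
          _ = (c4 + 1/2) * (m:ℝ)⁻¹ := by ring
          _ ≤ (2 * c4) * (m:ℝ)⁻¹ := by
              refine mul_le_mul_of_nonneg_right (by linarith) (by positivity)
          _ = (1/2:ℝ)^(D+1) * 4^(ℓ+1)/(m:ℝ)^1 := by
              rw [hc4, pow_succ, pow_succ, pow_one]
              field_simp
              ring
      · -- e ≥ 2
        have hbad : ∑ j ∈ bad, ∑ i, Q i j ≤ (1/2:ℝ)^D * 4^ℓ / (m:ℝ)^(e-1) := by
          rw [hbadsum]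
          rcases Finset.eq_empty_or_nonempty badeng with hempty | ⟨j₀, hj₀⟩
          · rw [hempty]
            simp
            positivity
          · have : badeng = {j₀} :=
              Finset.eq_singleton_iff_unique_mem.mpr ⟨hj₀, fun j hj => huniq j hj j₀ hj₀⟩
            rw [this, Finset.sum_singleton]
            have hreasm := sum_tsir_inter_le D q Es adm (E ∩ B j₀) (zz ℓ (μ j₀))
            have hsets : ∀ i : Fin q, Es i ∩ (E ∩ B j₀) = (Es i ∩ E) ∩ B j₀ := by
              intro i
              rw [Finset.inter_assoc]
            have hr : (1/2:ℝ) * ∑ i, Q i j₀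
                ≤ tsir (D+1) (restr (E ∩ B j₀) (zz ℓ (μ j₀))) := by
              refine le_trans (le_of_eq ?_) hreasm
              congr 1
              exact Finset.sum_congr rfl fun i _ => by rw [hQ, hsets i]
            have hIH2 : tsir (D+1) (restr (E ∩ B j₀) (zz ℓ (μ j₀)))
                ≤ (1/2:ℝ)^(D+1) * 4^ℓ / (μ j₀:ℝ)^(e-1) :=
              IHL ℓ hℓlt (D+1) (e-1) (μ j₀) (by omega) (by omega) (hμ2 j₀) _
            have hmon : (1/2:ℝ)^(D+1) * 4^ℓ / (μ j₀:ℝ)^(e-1)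
                ≤ (1/2:ℝ)^(D+1) * 4^ℓ / (m:ℝ)^(e-1) := by
              apply div_le_div_of_nonneg_left (by positivity) (by positivity)
              refine pow_le_pow_left₀ (by positivity) ?_ _
              exact_mod_cast mu_ge ℓ m j₀ (by omega)
            have hcomb := le_trans hr (le_trans hIH2 hmon)
            have : ∑ i, Q i j₀ ≤ 2 * ((1/2:ℝ)^(D+1) * 4^ℓ / (m:ℝ)^(e-1)) := by
              nlinarith [hcomb]
            refine le_trans this (le_of_eq ?_)
            rw [pow_succ]
            ring
        -- final arithmetic, e ≥ 2
        refine le_trans hr1 ?_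
        rw [hsplitgb]
        set c4 : ℝ := (1/2:ℝ)^D * 4^ℓ with hc4
        have hc4pos : (0:ℝ) < c4 := by rw [hc4]; positivity
        set P : ℝ := (m:ℝ)^(e-1) with hP
        have hPpos : (0:ℝ) < P := by rw [hP]; positivity
        have hme : (m:ℝ)^e = P * m := by
          rw [hP, ← pow_succ]
          congr 1
          omega
        have htot : (∑ j ∈ good, ∑ i, Q i j) + (∑ j ∈ bad, ∑ i, Q i j)
            ≤ c4 * (2/P) + c4/P := add_le_add hgood hbad
        calc (1/2:ℝ) * (m:ℝ)⁻¹ * ((∑ j ∈ good, ∑ i, Q i j) + (∑ j ∈ bad, ∑ i, Q i j))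
            ≤ (1/2:ℝ) * (m:ℝ)⁻¹ * (c4 * (2/P) + c4/P) :=
              mul_le_mul_of_nonneg_left htot (by positivity)
          _ = (3/2) * c4 / (P * (m:ℝ)) := by
              field_simp
              ring
          _ ≤ 2 * c4 / (P * (m:ℝ)) := by
              apply div_le_div_of_nonneg_right ?_ (by positivity)
              linarith
          _ = (1/2:ℝ)^(D+1) * 4^(ℓ+1)/(m:ℝ)^e := by
              rw [hme, hc4, pow_succ, pow_succ]
              ring

/-! ### Section 8 : main theorem -/

lemma tsir_mono_le {d d' : ℕ} (h : d ≤ d') (x : ℕ →₀ ℝ) : tsir d x ≤ tsir d' x := by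
  induction d' with
  | zero =>
    have : d = 0 := by omega
    rw [this]
  | succ d' ih =>
    rcases Nat.lt_or_ge d (d'+1) with h' | h'
    · exact le_trans (ih (by omega)) (tsir_mono_depth d' x)
    · have : d = d' + 1 := by omega
      rw [this]

lemma tsir_pos (k : ℕ) {x : ℕ →₀ ℝ} (hx : l1 x = 1) : 0 < tsir k x := by
  have hne : x.support.Nonempty := by
    rw [Finset.nonempty_iff_ne_empty]
    intro h
    have : x = 0 := by
      ext p
      have := Finsupp.notMem_support_iff.mp (by rw [h]; exact Finset.notMem_empty p)
      simpa using this
    rw [this, l1_zero] at hx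
    norm_num at hx
  obtain ⟨p, hp⟩ := hne
  have h1 : 0 < |x p| := abs_pos.mpr (Finsupp.mem_support_iff.mp hp)
  exact lt_of_lt_of_le (lt_of_lt_of_le h1 (abs_le_tsir0 x p)) (tsir_mono_le (Nat.zero_le k) x)

/-- for every `k` and `n ≥ 1` there is `x ∈ c00` with `‖x‖_{ℓ1} = 1` and
`‖x‖_{k+1}/‖x‖_k ≥ n/4`; hence `sup { ‖x‖_{k+1}/‖x‖_k : ‖x‖_{ℓ1} = 1 } = ∞`. -/
theorem tsir_ratio_unbounded (k : ℕ) :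
    (∀ n : ℕ, 1 ≤ n → ∃ x : ℕ →₀ ℝ, l1 x = 1 ∧
      (n : ℝ) / 4 ≤ tsir (k + 1) x / tsir k x) ∧
    (∀ C : ℝ, ∃ x : ℕ →₀ ℝ, l1 x = 1 ∧ C < tsir (k + 1) x / tsir k x) := by
  have main : ∀ n : ℕ, 1 ≤ n → ∃ x : ℕ →₀ ℝ, l1 x = 1 ∧
      (n : ℝ) / 4 ≤ tsir (k + 1) x / tsir k x := by
    intro n hn
    set m : ℕ := 2^(2*k+3) * n with hmdef
    have hpow2 : 2 ≤ 2^(2*k+3) := by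
      calc (2:ℕ) = 2^1 := rfl
        _ ≤ 2^(2*k+3) := Nat.pow_le_pow_right (by norm_num) (by omega)
    have hm2 : 2 ≤ m := by
      calc 2 = 2 * 1 := rfl
        _ ≤ 2^(2*k+3) * n := Nat.mul_le_mul hpow2 hn
    have hm1 : 1 ≤ m := by omega
    set x : ℕ →₀ ℝ := zz (k+1) m with hx
    have hl1 : l1 x = 1 := l1_zz (k+1) m hm1
    refine ⟨x, hl1, ?_⟩
    have htpos : 0 < tsir k x := tsir_pos k hl1
    have hlow : (1/2:ℝ)^(k+1) ≤ tsir (k+1) x := tsir_zz_lower (k+1) m hm1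
    have hupper : tsir k x ≤ (1/2:ℝ)^k * 4^(k+1) / (m:ℝ) := by
      have hsub : restr (Finset.Ico m (FF (k+1) m)) (zz (k+1) m) = zz (k+1) m :=
        restr_eq_self (fun p hp => supp_zz (k+1) m hm1 hp)
      have := upperA (k+1) k 1 m (by omega) (by omega) hm2 (Finset.Ico m (FF (k+1) m))
      rw [hsub, pow_one] at this
      exact this
    rw [le_div_iff₀ htpos]
    have hmcast : (m:ℝ) = 2^(2*k+3) * (n:ℝ) := by
      rw [hmdef]
      push_cast
      ring
    have hn0 : (0:ℝ) < n := by exact_mod_cast hn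
    have harith : (n:ℝ)/4 * ((1/2:ℝ)^k * 4^(k+1) / (m:ℝ)) = (1/2:ℝ)^(k+3) := by
      rw [hmcast]
      have h4 : (4:ℝ)^(k+1) = 2^(2*k+2) := by
        rw [show (4:ℝ) = 2^2 by norm_num, ← pow_mul, show 2*(k+1) = 2*k+2 by omega]
      rw [h4]
      simp only [one_div, inv_pow]
      have h2k : ((2:ℝ)^k) ≠ 0 := by positivity
      have h2k3 : ((2:ℝ)^(2*k+3)) ≠ 0 := by positivity
      have h2k3' : ((2:ℝ)^(k+3)) ≠ 0 := by positivity
      field_simp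
      rw [show (4:ℝ) = 2^2 by norm_num]
      ring
    calc (n:ℝ)/4 * tsir k x
        ≤ (n:ℝ)/4 * ((1/2:ℝ)^k * 4^(k+1) / (m:ℝ)) :=
          mul_le_mul_of_nonneg_left hupper (by positivity)
      _ = (1/2:ℝ)^(k+3) := harith
      _ ≤ (1/2:ℝ)^(k+1) :=
          pow_le_pow_of_le_one (by norm_num) (by norm_num) (by omega)
      _ ≤ tsir (k+1) x := hlow
  refine ⟨main, fun C => ?_⟩
  set n : ℕ := ⌊max 0 (4*C)⌋₊ + 1 with hn
  obtain ⟨x, hx1, hx2⟩ := main n (by omega)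
  refine ⟨x, hx1, lt_of_lt_of_le ?_ hx2⟩
  have h1 : (4:ℝ)*C ≤ max 0 (4*C) := le_max_right _ _
  have h2 : max 0 (4*C) < (n:ℝ) := by
    rw [hn]
    push_cast
    exact Nat.lt_floor_add_one _
  have : 4*C < (n:ℝ) := lt_of_le_of_lt h1 h2
  linarith
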